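/- Let Φ be an irreducible root system inside R(V) in which every simple root is of type 2 (squared length 2). Then Φ is not of type E (E_6, E_7, E_8). -/
import Mathlib


open Finset

/-- The natural pairing of a functional `a ∈ N* = Hom(ℤ^n, ℤ)` (represented by its
coordinate vector) with `x ∈ N = ℤ^n`. -/
def pairZ {n : ℕ} (a x : Fin n → ℤ) : ℤ := ∑ j, a j * x j

/-- The bilinear form `(α,β) = Σ_i ⟨α,v_i⟩⟨β,v_i⟩` on `N*`. -/
def formV {n m : ℕ} (v : Fin m → Fin n → ℤ) (a b : Fin n → ℤ) : ℤ :=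
  ∑ i, pairZ a (v i) * pairZ b (v i)

/-- Type 1 element: `|⟨α,v_i⟩| = 1` for some `i` and `⟨α,v_k⟩ = 0` for `k ≠ i`. -/
def IsType1 {n m : ℕ} (v : Fin m → Fin n → ℤ) (a : Fin n → ℤ) : Prop :=
  ∃ i, (pairZ a (v i) = 1 ∨ pairZ a (v i) = -1) ∧ ∀ k, k ≠ i → pairZ a (v k) = 0

/-- Type 2 element: `|⟨α,v_i⟩| = |⟨α,v_j⟩| = 1` for some `i ≠ j` and `⟨α,v_k⟩ = 0`
for `k ≠ i, j`. -/
def IsType2 {n m : ℕ} (v : Fin m → Fin n → ℤ) (a : Fin n → ℤ) : Prop :=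
  ∃ i j, i ≠ j ∧ (pairZ a (v i) = 1 ∨ pairZ a (v i) = -1) ∧
    (pairZ a (v j) = 1 ∨ pairZ a (v j) = -1) ∧
    ∀ k, k ≠ i → k ≠ j → pairZ a (v k) = 0

/-- The root system `R(V)` associated to the finite set `V = {v_i}`. -/
def RV {n m : ℕ} (v : Fin m → Fin n → ℤ) : Set (Fin n → ℤ) :=
  {a | IsType1 v a ∨ IsType2 v a}

/-- `Φ` is a subsystem of the set of roots `S`: it is contained in `S` and closed
under the reflections `r_a(b) = b − (2(b,a)/(a,a))·a` in its own elements. -/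
def IsRootSubsystem {n m : ℕ} (v : Fin m → Fin n → ℤ)
    (S Φ : Set (Fin n → ℤ)) : Prop :=
  Φ ⊆ S ∧ ∀ a ∈ Φ, ∀ b ∈ Φ, b - ((2 * formV v b a) / formV v a a) • a ∈ Φ

/-- `Δ` is a base (set of simple roots) of `Φ`: a linearly independent subset such
that every root of `Φ` is a nonnegative or nonpositive integral combination of `Δ`. -/
def IsBase {n m : ℕ} (v : Fin m → Fin n → ℤ)
    (Φ : Set (Fin n → ℤ)) (Δ : Finset (Fin n → ℤ)) : Prop :=
  ↑Δ ⊆ Φ ∧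
  LinearIndependent ℚ (fun a : Δ => (fun j => ((a : Fin n → ℤ) j : ℚ) : Fin n → ℚ)) ∧
  ∀ b ∈ Φ, (∃ c : (Fin n → ℤ) → ℕ, b = ∑ a ∈ Δ, (c a : ℤ) • a) ∨
    (∃ c : (Fin n → ℤ) → ℕ, b = -∑ a ∈ Δ, (c a : ℤ) • a)

/-- `Φ` is irreducible: nonempty and not a union of two nonempty mutually
orthogonal parts. -/
def IsIrred {n m : ℕ} (v : Fin m → Fin n → ℤ) (Φ : Set (Fin n → ℤ)) : Prop :=
  Φ.Nonempty ∧ ∀ Φ₁ Φ₂ : Set (Fin n → ℤ), Φ = Φ₁ ∪ Φ₂ →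
    (∀ a ∈ Φ₁, ∀ b ∈ Φ₂, formV v a b = 0) → Φ₁ = ∅ ∨ Φ₂ = ∅

/-- Gram matrix of the simple roots of `A_ℓ` (all roots of squared length 2,
simple roots forming a chain). -/
def gramA (ℓ : ℕ) (i j : Fin ℓ) : ℤ :=
  if i = j then 2
  else if (i : ℕ) + 1 = j ∨ (j : ℕ) + 1 = i then -1 else 0

/-- Gram matrix of the simple roots of `B_ℓ` (chain with a short simple root of
squared length 1 at the end). -/
def gramB (ℓ : ℕ) (i j : Fin ℓ) : ℤ :=
  if i = j then (if (i : ℕ) = ℓ - 1 then 1 else 2)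
  else if (i : ℕ) + 1 = j ∨ (j : ℕ) + 1 = i then -1 else 0

/-- Gram matrix of the simple roots of `D_ℓ` (chain `0, …, ℓ−2` with the extra node
`ℓ−1` attached to node `ℓ−3`). -/
def gramD (ℓ : ℕ) (i j : Fin ℓ) : ℤ :=
  if i = j then 2
  else if ((i : ℕ) + 1 = j ∧ (j : ℕ) ≤ ℓ - 2) ∨ ((j : ℕ) + 1 = i ∧ (i : ℕ) ≤ ℓ - 2) ∨
      ((i : ℕ) = ℓ - 3 ∧ (j : ℕ) = ℓ - 1) ∨ ((j : ℕ) = ℓ - 3 ∧ (i : ℕ) = ℓ - 1) then -1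
  else 0

/-- Gram matrix of the simple roots of `E_ℓ` (`ℓ = 6, 7, 8`): chain `0, …, ℓ−2`
with the extra node `ℓ−1` attached to node `2`. -/
def gramE (ℓ : ℕ) (i j : Fin ℓ) : ℤ :=
  if i = j then 2
  else if ((i : ℕ) + 1 = j ∧ (j : ℕ) ≤ ℓ - 2) ∨ ((j : ℕ) + 1 = i ∧ (i : ℕ) ≤ ℓ - 2) ∨
      ((i : ℕ) = 2 ∧ (j : ℕ) = ℓ - 1) ∨ ((j : ℕ) = 2 ∧ (i : ℕ) = ℓ - 1) then -1
  else 0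

/-- The set of simple roots `Δ` realizes the Gram matrix `g` under some
enumeration. -/
def MatchesGram {n m : ℕ} (v : Fin m → Fin n → ℤ) (Δ : Finset (Fin n → ℤ))
    (ℓ : ℕ) (g : Fin ℓ → Fin ℓ → ℤ) : Prop :=
  ∃ e : Fin ℓ → Fin n → ℤ, Function.Injective e ∧ (∀ i, e i ∈ Δ) ∧
    (∀ a ∈ Δ, ∃ i, e i = a) ∧ ∀ i j, formV v (e i) (e j) = g i j

def IsTypeA {n m : ℕ} (v : Fin m → Fin n → ℤ) (Δ : Finset (Fin n → ℤ)) : Prop :=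
  ∃ ℓ, MatchesGram v Δ ℓ (gramA ℓ)

def IsTypeB {n m : ℕ} (v : Fin m → Fin n → ℤ) (Δ : Finset (Fin n → ℤ)) : Prop :=
  ∃ ℓ, MatchesGram v Δ ℓ (gramB ℓ)

def IsTypeD {n m : ℕ} (v : Fin m → Fin n → ℤ) (Δ : Finset (Fin n → ℤ)) : Prop :=
  ∃ ℓ, 4 ≤ ℓ ∧ MatchesGram v Δ ℓ (gramD ℓ)

def IsTypeE {n m : ℕ} (v : Fin m → Fin n → ℤ) (Δ : Finset (Fin n → ℤ)) : Prop :=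
  ∃ ℓ, (ℓ = 6 ∨ ℓ = 7 ∨ ℓ = 8) ∧ MatchesGram v Δ ℓ (gramE ℓ)

-- sum over Fin m of f with support ⊆ {p,q}
lemma sum_two {m : ℕ} (p q : Fin m) (hpq : p ≠ q) (f : Fin m → ℤ)
    (h : ∀ k, k ≠ p → k ≠ q → f k = 0) : ∑ k, f k = f p + f q := by
  have : ∑ k, f k = ∑ k ∈ ({p, q} : Finset (Fin m)), f k := by
    refine (Finset.sum_subset (Finset.subset_univ _) ?_).symm
    intro k _ hk
    simp only [Finset.mem_insert, Finset.mem_singleton, not_or] at hk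
    exact h k hk.1 hk.2
  rw [this, Finset.sum_pair hpq]

lemma type2_vals {n m : ℕ} {v : Fin m → Fin n → ℤ} {a : Fin n → ℤ}
    (ha : IsType2 v a) (k : Fin m) :
    pairZ a (v k) = 1 ∨ pairZ a (v k) = -1 ∨ pairZ a (v k) = 0 := by
  obtain ⟨i, j, hij, hi, hj, h0⟩ := ha
  by_cases hki : k = i
  · subst hki; tauto
  by_cases hkj : k = j
  · subst hkj; tauto
  · exact Or.inr (Or.inr (h0 k hki hkj))

lemma type2_norm {n m : ℕ} {v : Fin m → Fin n → ℤ} {a : Fin n → ℤ}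
    (ha : IsType2 v a) (p : Fin m) (hp : pairZ a (v p) ≠ 0) :
    ∃ r, r ≠ p ∧ (pairZ a (v p) = 1 ∨ pairZ a (v p) = -1) ∧
      (pairZ a (v r) = 1 ∨ pairZ a (v r) = -1) ∧
      ∀ k, k ≠ p → k ≠ r → pairZ a (v k) = 0 := by
  obtain ⟨i, j, hij, hi, hj, h0⟩ := ha
  by_cases hpi : p = i
  · subst hpi
    exact ⟨j, fun h => hij h.symm, hi, hj, fun k hk1 hk2 => h0 k hk1 hk2⟩
  by_cases hpj : p = j
  · subst hpj
    exact ⟨i, fun h => hij h, hj, hi, fun k hk1 hk2 => h0 k hk2 hk1⟩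
  · exact absurd (h0 p hpi hpj) hp

lemma attach {n m : ℕ} {v : Fin m → Fin n → ℤ} {α b : Fin n → ℤ}
    {p q : Fin m} (hpq : p ≠ q)
    (hp : pairZ α (v p) = 1 ∨ pairZ α (v p) = -1)
    (hq : pairZ α (v q) = 1 ∨ pairZ α (v q) = -1)
    (h0 : ∀ k, k ≠ p → k ≠ q → pairZ α (v k) = 0)
    (hb : IsType2 v b) (hform : formV v α b = -1) :
    (pairZ b (v p) = -pairZ α (v p) ∧ pairZ b (v q) = 0) ∨
    (pairZ b (v q) = -pairZ α (v q) ∧ pairZ b (v p) = 0) := by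
  have hsum : pairZ α (v p) * pairZ b (v p) + pairZ α (v q) * pairZ b (v q) = -1 := by
    have h := sum_two p q hpq (fun k => pairZ α (v k) * pairZ b (v k))
      (fun k hk1 hk2 => by simp [h0 k hk1 hk2])
    rw [formV, h] at hform
    simpa using hform
  have hbp := type2_vals hb p
  have hbq := type2_vals hb q
  rcases hp with hp | hp <;> rcases hq with hq | hq <;>
    rw [hp, hq] at hsum ⊢ <;> omega

lemma pairContra {n m : ℕ} (v : Fin m → Fin n → ℤ) (β γ w : Fin n → ℤ)
    (p : Fin m) (ε : ℤ)
    (hβ : IsType2 v β) (hγ : IsType2 v γ)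
    (hεβ : pairZ β (v p) = ε) (hεγ : pairZ γ (v p) = ε) (hε : ε = 1 ∨ ε = -1)
    (hβγ : formV v β γ = 0)
    (hwβ : formV v w β = -1) (hwγ : formV v w γ = 0) : False := by
  have hεne : ε ≠ 0 := by rcases hε with h | h <;> simp [h]
  obtain ⟨r, hrp, _, hβr, hβ0⟩ := type2_norm hβ p (hεβ ▸ hεne)
  obtain ⟨s, hsp, _, hγs, hγ0⟩ := type2_norm hγ p (hεγ ▸ hεne)
  have h1 : pairZ β (v p) * pairZ γ (v p) + pairZ β (v r) * pairZ γ (v r) = 0 := by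
    have h := sum_two p r (fun h => hrp h.symm)
      (fun k => pairZ β (v k) * pairZ γ (v k))
      (fun k hk1 hk2 => by simp [hβ0 k hk1 hk2])
    rw [formV, h] at hβγ
    simpa using hβγ
  rw [hεβ, hεγ] at h1
  have hεε : ε * ε = 1 := by rcases hε with h | h <;> simp [h]
  have h2 : pairZ β (v r) * pairZ γ (v r) = -1 := by omega
  have hγr : pairZ γ (v r) ≠ 0 := by intro h; rw [h, mul_zero] at h2; omega
  have hrs : r = s := by
    by_contra hne
    exact hγr (hγ0 r hrp hne)
  have hγ0r : ∀ k, k ≠ p → k ≠ r → pairZ γ (v k) = 0 := by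
    intro k hk1 hk2
    exact hγ0 k hk1 (by rw [← hrs]; exact hk2)
  have hγval : pairZ γ (v r) = -pairZ β (v r) := by
    rcases hβr with h | h <;> rw [h] at h2 ⊢ <;> omega
  have h3 : pairZ w (v p) * ε + pairZ w (v r) * pairZ β (v r) = -1 := by
    have h := sum_two p r (fun h => hrp h.symm)
      (fun k => pairZ w (v k) * pairZ β (v k))
      (fun k hk1 hk2 => by simp [hβ0 k hk1 hk2])
    rw [formV, h] at hwβ
    simp only [hεβ] at hwβ
    simpa using hwβ
  have h4 : pairZ w (v p) * ε - pairZ w (v r) * pairZ β (v r) = 0 := by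
    have h := sum_two p r (fun h => hrp h.symm)
      (fun k => pairZ w (v k) * pairZ γ (v k))
      (fun k hk1 hk2 => by simp [hγ0r k hk1 hk2])
    rw [formV, h] at hwγ
    simp only [hεγ, hγval] at hwγ
    simp at hwγ
    omega
  omega

lemma Ecore {n m : ℕ} (v : Fin m → Fin n → ℤ) (α b1 b2 b3 w12 w3 : Fin n → ℤ)
    (hα : IsType2 v α) (h1 : IsType2 v b1) (h2 : IsType2 v b2) (h3 : IsType2 v b3)
    (g1 : formV v α b1 = -1) (g2 : formV v α b2 = -1) (g3 : formV v α b3 = -1)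
    (g12 : formV v b1 b2 = 0) (g13 : formV v b1 b3 = 0) (g23 : formV v b2 b3 = 0)
    (gw1 : formV v w12 b1 = -1) (gw2 : formV v w12 b2 = 0) (gw3 : formV v w12 b3 = 0)
    (gz2 : formV v w3 b2 = -1) (gz3 : formV v w3 b3 = 0) : False := by
  obtain ⟨p, q, hpq, hp, hq, h0⟩ := hα
  have hεp : -pairZ α (v p) = 1 ∨ -pairZ α (v p) = -1 := by omega
  have hεq : -pairZ α (v q) = 1 ∨ -pairZ α (v q) = -1 := by omega
  have a1 := attach hpq hp hq h0 h1 g1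
  have a2 := attach hpq hp hq h0 h2 g2
  have a3 := attach hpq hp hq h0 h3 g3
  rcases a1 with ⟨c1, _⟩ | ⟨c1, _⟩ <;> rcases a2 with ⟨c2, _⟩ | ⟨c2, _⟩ <;>
    rcases a3 with ⟨c3, _⟩ | ⟨c3, _⟩
  · exact pairContra v b1 b2 w12 p _ h1 h2 c1 c2 hεp g12 gw1 gw2
  · exact pairContra v b1 b2 w12 p _ h1 h2 c1 c2 hεp g12 gw1 gw2
  · exact pairContra v b1 b3 w12 p _ h1 h3 c1 c3 hεp g13 gw1 gw3
  · exact pairContra v b2 b3 w3 q _ h2 h3 c2 c3 hεq g23 gz2 gz3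
  · exact pairContra v b2 b3 w3 p _ h2 h3 c2 c3 hεp g23 gz2 gz3
  · exact pairContra v b1 b3 w12 q _ h1 h3 c1 c3 hεq g13 gw1 gw3
  · exact pairContra v b1 b2 w12 q _ h1 h2 c1 c2 hεq g12 gw1 gw2
  · exact pairContra v b1 b2 w12 q _ h1 h2 c1 c2 hεq g12 gw1 gw2

/-- An irreducible subsystem of `R(V)` all of whose simple roots are of type 2 is
not of type E. -/
theorem stmt12 {n m : ℕ} (v : Fin m → Fin n → ℤ)
    (hv : Module.finrank ℤ (Submodule.span ℤ (Set.range v)) = n)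
    (Φ : Set (Fin n → ℤ)) (Δ : Finset (Fin n → ℤ))
    (hsub : IsRootSubsystem v (RV v) Φ) (hbase : IsBase v Φ Δ)
    (hirr : IsIrred v Φ)
    (hlong : ∀ a ∈ Δ, IsType2 v a) :
    ¬ IsTypeE v Δ := by
  rintro ⟨ℓ, hℓ, e, einj, hmem, hsurj, hg⟩
  have hT : ∀ i, IsType2 v (e i) := fun i => hlong _ (hmem i)
  rcases hℓ with rfl | rfl | rfl
  · exact Ecore v (e 2) (e 1) (e 3) (e 5) (e 0) (e 4)
      (hT 2) (hT 1) (hT 3) (hT 5)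
      ((hg 2 1).trans (by decide)) ((hg 2 3).trans (by decide)) ((hg 2 5).trans (by decide))
      ((hg 1 3).trans (by decide)) ((hg 1 5).trans (by decide)) ((hg 3 5).trans (by decide))
      ((hg 0 1).trans (by decide)) ((hg 0 3).trans (by decide)) ((hg 0 5).trans (by decide))
      ((hg 4 3).trans (by decide)) ((hg 4 5).trans (by decide))
  · exact Ecore v (e 2) (e 1) (e 3) (e 6) (e 0) (e 4)
      (hT 2) (hT 1) (hT 3) (hT 6)
      ((hg 2 1).trans (by decide)) ((hg 2 3).trans (by decide)) ((hg 2 6).trans (by decide))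
      ((hg 1 3).trans (by decide)) ((hg 1 6).trans (by decide)) ((hg 3 6).trans (by decide))
      ((hg 0 1).trans (by decide)) ((hg 0 3).trans (by decide)) ((hg 0 6).trans (by decide))
      ((hg 4 3).trans (by decide)) ((hg 4 6).trans (by decide))
  · exact Ecore v (e 2) (e 1) (e 3) (e 7) (e 0) (e 4)
      (hT 2) (hT 1) (hT 3) (hT 7)
      ((hg 2 1).trans (by decide)) ((hg 2 3).trans (by decide)) ((hg 2 7).trans (by decide))
      ((hg 1 3).trans (by decide)) ((hg 1 7).trans (by decide)) ((hg 3 7).trans (by decide))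
      ((hg 0 1).trans (by decide)) ((hg 0 3).trans (by decide)) ((hg 0 7).trans (by decide))
      ((hg 4 3).trans (by decide)) ((hg 4 7).trans (by decide))
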